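/- Let q ∈ ℕ, q ≥ 1, and m ∈ {0,1,…,q}. There exist unique real numbers a_0, a_1, …, a_{q−m} such that for all x ∈ ℝ, cos((q+1)x) = (a_0/2 + Σ_{ν=1}^{q−m} a_ν cos(νx)) · ∏_{j=1}^{m+1} (cos x − cos(π(2j−1)/(2q+2))), and these numbers satisfy a_0 > a_1 > ⋯ > a_{q−m} > 0. -/

import Mathlib

namespace DiscPaper

open Real Finset Polynomial

theorem sinid (A B h : ℝ) : Real.sin (A+B) * Real.sin (A+B-h) =
    Real.sin A * Real.sin (A-h) + Real.sin B * Real.sin (B-h)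
      + 2 * Real.cos (A+B-h) * (Real.sin A * Real.sin B) := by
  simp only [Real.sin_add, Real.sin_sub, Real.cos_add, Real.cos_sub]
  linear_combination (Real.cos h * Real.sin A^2 - Real.sin h * Real.sin A * Real.cos A) * (Real.sin_sq_add_cos_sq B)
    + (Real.cos h * Real.sin B^2 - Real.sin h * Real.sin B * Real.cos B) * (Real.sin_sq_add_cos_sq A)

noncomputable def sn (n : ℕ) (r : ℝ) : ℝ := Real.sin (π * r / (2*(n:ℝ)))

noncomputable def gg (n d ν : ℕ) : ℝ :=
  if ν ≤ d then ∏ i ∈ Finset.range (d - ν), (sn n (2*(d:ℝ) - (i:ℝ)) / sn n ((i:ℝ)+1))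
  else 0

lemma sinpos {n : ℕ} {r : ℝ} (hn : 0 < n) (h0 : 0 < r) (h1 : r < 2*n) : 0 < sn n r := by
  apply Real.sin_pos_of_pos_of_lt_pi
  · positivity
  · rw [div_lt_iff₀ (by positivity)]
    have hπ : 0 < π := Real.pi_pos
    nlinarith

lemma gg_diag {n d : ℕ} : gg n d d = 1 := by simp [gg]

lemma gg_zero {n d ν : ℕ} (h : d < ν) : gg n d ν = 0 := by
  simp [gg, Nat.not_le.mpr h]

lemma gg_pos {n d ν : ℕ} (hdn : d < n) (hν : ν ≤ d) : 0 < gg n d ν := by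
  rw [gg, if_pos hν]
  apply Finset.prod_pos
  intro i hi
  rw [Finset.mem_range] at hi
  have hn : 0 < n := lt_of_le_of_lt (Nat.zero_le d) hdn
  have hi' : (i:ℝ) < (d:ℝ) - ν := by
    have := (Nat.cast_lt (α := ℝ)).2 hi
    have : (i:ℝ) < ((d - ν : ℕ):ℝ) := this
    rwa [Nat.cast_sub hν] at this
  have hd : (d:ℝ) < (n:ℝ) := by exact_mod_cast hdn
  have hν' : (0:ℝ) ≤ (ν:ℝ) := Nat.cast_nonneg ν
  have h1n : (1:ℝ) ≤ (n:ℝ) := by exact_mod_cast hn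
  apply div_pos
  · apply sinpos hn <;> nlinarith
  · apply sinpos hn <;> nlinarith

lemma gg_ratio {n d ν : ℕ} (hν : ν < d) :
    gg n d ν = gg n d (ν+1) * (sn n ((d:ℝ)+ν+1) / sn n ((d:ℝ)-ν)) := by
  have h1 : ν ≤ d := le_of_lt hν
  have h2 : ν + 1 ≤ d := hν
  rw [gg, gg, if_pos h1, if_pos h2]
  have h3 : d - ν = (d - (ν+1)) + 1 := by omega
  rw [h3, Finset.prod_range_succ]
  have hc : ((d - (ν+1) : ℕ):ℝ) = (d:ℝ) - ν - 1 := by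
    rw [Nat.cast_sub h2]; push_cast; ring
  rw [hc]
  congr 2 <;> ring


-- single factor value
lemma gg_one_below {n d : ℕ} : gg n (d+1) d = sn n (2*(d:ℝ)+2) / sn n 1 := by
  rw [gg, if_pos (by omega)]
  have : d + 1 - d = 1 := by omega
  rw [this, Finset.prod_range_one]
  norm_num
  congr 1
  push_cast; ring

lemma gg_lift {n d : ℕ} (hdn : d + 1 ≤ n) :
    ∀ k, k ≤ d → gg n (d+1) (d-k) * sn n (2*(d:ℝ)+1-(k:ℝ)) * sn n ((k:ℝ)+1)
      = gg n d (d-k) * (sn n (2*(d:ℝ)+2) * sn n (2*(d:ℝ)+1)) := by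
  have hn : 0 < n := by omega
  intro k
  induction k with
  | zero =>
    intro _
    simp only [Nat.sub_zero, Nat.cast_zero, sub_zero]
    rw [gg_one_below, gg_diag]
    have h1 : sn n 1 ≠ 0 := by
      have : (0:ℝ) < sn n 1 := sinpos hn one_pos (by exact_mod_cast by omega)
      linarith
    field_simp
    simp only [zero_add]; ring
  | succ k ih =>
    intro hk
    have hk' : k ≤ d := by omega
    have IH := ih hk'
    -- ratios
    have hr1 : gg n (d+1) (d-(k+1)) = gg n (d+1) (d-k) * (sn n (2*(d:ℝ)+1-(k:ℝ)) / sn n ((k:ℝ)+2)) := by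
      have h := gg_ratio (n := n) (d := d+1) (ν := d-(k+1)) (by omega)
      have e1 : d - (k+1) + 1 = d - k := by omega
      have e2 : ((d-(k+1):ℕ):ℝ) = (d:ℝ) - k - 1 := by
        rw [Nat.cast_sub (by omega)]; push_cast; ring
      rw [e1, e2] at h
      rw [h]
      congr 2
      · push_cast; ring
      · push_cast; ring
    have hr2 : gg n d (d-(k+1)) = gg n d (d-k) * (sn n (2*(d:ℝ)-(k:ℝ)) / sn n ((k:ℝ)+1)) := by
      have h := gg_ratio (n := n) (d := d) (ν := d-(k+1)) (by omega)
      have e1 : d - (k+1) + 1 = d - k := by omega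
      have e2 : ((d-(k+1):ℕ):ℝ) = (d:ℝ) - k - 1 := by
        rw [Nat.cast_sub (by omega)]; push_cast; ring
      rw [e1, e2] at h
      rw [h]
      congr 2
      · push_cast; ring
      · push_cast; ring
    have hnz1 : sn n ((k:ℝ)+1) ≠ 0 := by
      have : (0:ℝ) < sn n ((k:ℝ)+1) := by
        apply sinpos hn (by positivity)
        have : (k:ℝ) + 1 ≤ (n:ℝ) := by exact_mod_cast by omega
        have h1n : (1:ℝ) ≤ (n:ℝ) := by exact_mod_cast hn
        nlinarith
      linarith
    have hnz2 : sn n ((k:ℝ)+2) ≠ 0 := by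
      have : (0:ℝ) < sn n ((k:ℝ)+2) := by
        apply sinpos hn (by positivity)
        have : (k:ℝ) + 2 ≤ (n:ℝ) := by exact_mod_cast by omega
        have h1n : (1:ℝ) ≤ (n:ℝ) := by exact_mod_cast hn
        nlinarith
      linarith
    rw [hr1, hr2]
    have ec : ((k+1:ℕ):ℝ) = (k:ℝ)+1 := by push_cast; ring
    rw [ec]
    have goal2 : gg n (d+1) (d-k) * (sn n (2*(d:ℝ)+1-(k:ℝ)) / sn n ((k:ℝ)+2)) *
        sn n (2*(d:ℝ)+1-((k:ℝ)+1)) * sn n (((k:ℝ)+1)+1)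
        = gg n (d+1) (d-k) * sn n (2*(d:ℝ)+1-(k:ℝ)) * sn n (2*(d:ℝ)-(k:ℝ)) := by
      have e3 : (2*(d:ℝ)+1-((k:ℝ)+1)) = 2*(d:ℝ)-(k:ℝ)  := by ring
      have e4 : (((k:ℝ)+1)+1) = (k:ℝ)+2 := by ring
      rw [e3, e4]
      field_simp
    calc gg n (d+1) (d-k) * (sn n (2*(d:ℝ)+1-(k:ℝ)) / sn n ((k:ℝ)+2)) *
        sn n (2*(d:ℝ)+1-((k:ℝ)+1)) * sn n (((k:ℝ)+1)+1)
        = gg n (d+1) (d-k) * sn n (2*(d:ℝ)+1-(k:ℝ)) * sn n (2*(d:ℝ)-(k:ℝ)) := goal2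
      _ = (gg n d (d-k) * (sn n (2*(d:ℝ)+2) * sn n (2*(d:ℝ)+1))) * sn n (2*(d:ℝ)-(k:ℝ)) / sn n ((k:ℝ)+1) := by
          rw [← IH]; field_simp
      _ = gg n d (d-k) * (sn n (2*(d:ℝ)-(k:ℝ)) / sn n ((k:ℝ)+1)) * (sn n (2*(d:ℝ)+2) * sn n (2*(d:ℝ)+1)) := by
          field_simp


lemma sn_ne {n : ℕ} {r : ℝ} (hn : 0 < n) (h0 : 0 < r) (h1 : r < 2*n) : sn n r ≠ 0 :=
  ne_of_gt (sinpos hn h0 h1)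

-- scalar identity in sn form
lemma sinid' (n : ℕ) (u v : ℝ) :
    sn n (u+v) * sn n (u+v-1) =
      sn n u * sn n (u-1) + sn n v * sn n (v-1)
        + 2 * Real.cos (π*(u+v-1)/(2*(n:ℝ))) * (sn n u * sn n v) := by
  have h := sinid (π*u/(2*(n:ℝ))) (π*v/(2*(n:ℝ))) (π*1/(2*(n:ℝ)))
  unfold sn
  have e1 : π*(u+v)/(2*(n:ℝ)) = π*u/(2*(n:ℝ)) + π*v/(2*(n:ℝ)) := by ring
  have e2 : π*(u+v-1)/(2*(n:ℝ)) = π*u/(2*(n:ℝ)) + π*v/(2*(n:ℝ)) - π*1/(2*(n:ℝ)) := by ring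
  have e3 : π*(u-1)/(2*(n:ℝ)) = π*u/(2*(n:ℝ)) - π*1/(2*(n:ℝ)) := by ring
  have e4 : π*(v-1)/(2*(n:ℝ)) = π*v/(2*(n:ℝ)) - π*1/(2*(n:ℝ)) := by ring
  rw [e1, e2, e3, e4]
  exact h

lemma grecS {n d μ : ℕ} (hdn : d + 1 ≤ n) (hμ : μ + 1 ≤ d) :
    gg n (d+1) (μ+1) = gg n d μ + gg n d (μ+2)
      + 2 * Real.cos (π*(2*(d:ℝ)+1)/(2*(n:ℝ))) * gg n d (μ+1) := by
  have hn : 0 < n := by omega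
  have h1n : (1:ℝ) ≤ (n:ℝ) := by exact_mod_cast hn
  have hdr : (d:ℝ) + 1 ≤ (n:ℝ) := by exact_mod_cast hdn
  have hμr : (μ:ℝ) + 1 ≤ (d:ℝ) := by exact_mod_cast hμ
  have hμ0 : (0:ℝ) ≤ (μ:ℝ) := Nat.cast_nonneg μ
  -- nonzero sines
  have nza : sn n ((d:ℝ)+(μ:ℝ)+2) ≠ 0 := sn_ne hn (by nlinarith) (by nlinarith)
  have nzb : sn n ((d:ℝ)-(μ:ℝ)) ≠ 0 := sn_ne hn (by nlinarith) (by nlinarith)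
  -- lift equation
  have hP : gg n (d+1) (μ+1) * sn n ((d:ℝ)+(μ:ℝ)+2) * sn n ((d:ℝ)-(μ:ℝ))
      = gg n d (μ+1) * (sn n (2*(d:ℝ)+2) * sn n (2*(d:ℝ)+1)) := by
    have h := gg_lift hdn (d-(μ+1)) (by omega)
    have e1 : d - (d-(μ+1)) = μ+1 := by omega
    have e2 : ((d-(μ+1):ℕ):ℝ) = (d:ℝ) - μ - 1 := by
      rw [Nat.cast_sub hμ]; push_cast; ring
    rw [e1, e2] at h
    have e3 : 2*(d:ℝ)+1-((d:ℝ)-μ-1) = (d:ℝ)+(μ:ℝ)+2 := by ring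
    have e4 : ((d:ℝ)-μ-1)+1 = (d:ℝ)-(μ:ℝ) := by ring
    rw [e3, e4] at h
    exact h
  -- ratio (a)
  have ha : gg n d μ = gg n d (μ+1) * (sn n ((d:ℝ)+(μ:ℝ)+1) / sn n ((d:ℝ)-(μ:ℝ))) := by
    have := gg_ratio (n := n) (d := d) (ν := μ) (by omega)
    convert this using 3 <;> push_cast <;> ring
  -- ratio (b)
  have hb : gg n d (μ+2) = gg n d (μ+1) * (sn n ((d:ℝ)-(μ:ℝ)-1) / sn n ((d:ℝ)+(μ:ℝ)+2)) := by
    rcases Nat.lt_or_ge (μ+1) d with hlt | hge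
    · have h := gg_ratio (n := n) (d := d) (ν := μ+1) hlt
      have e1 : (d:ℝ)+((μ:ℕ):ℝ)+1+1 = (d:ℝ)+(μ:ℝ)+2 := by push_cast; ring
      have nzc : sn n ((d:ℝ)-(μ:ℝ)-1) ≠ 0 := by
        apply sn_ne hn
        · have : (μ:ℝ) + 2 ≤ (d:ℝ) := by exact_mod_cast hlt
          nlinarith
        · nlinarith
      have h' : gg n d (μ+1) = gg n d (μ+2) * (sn n ((d:ℝ)+(μ:ℝ)+2) / sn n ((d:ℝ)-(μ:ℝ)-1)) := by
        convert h using 3 <;> push_cast <;> ring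
      rw [h']
      field_simp
    · have hd : d = μ+1 := by omega
      subst hd
      rw [gg_zero (by omega)]
      have : ((μ+1:ℕ):ℝ)-(μ:ℝ)-1 = 0 := by push_cast; ring
      rw [this]
      have : sn n 0 = 0 := by unfold sn; simp
      rw [this]
      simp
  -- scalar identity
  have hs : sn n (2*(d:ℝ)+2) * sn n (2*(d:ℝ)+1)
      = sn n ((d:ℝ)+(μ:ℝ)+2) * sn n ((d:ℝ)+(μ:ℝ)+1) + sn n ((d:ℝ)-(μ:ℝ)) * sn n ((d:ℝ)-(μ:ℝ)-1)
        + 2 * Real.cos (π*(2*(d:ℝ)+1)/(2*(n:ℝ))) * (sn n ((d:ℝ)+(μ:ℝ)+2) * sn n ((d:ℝ)-(μ:ℝ))) := by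
    have h := sinid' n ((d:ℝ)+(μ:ℝ)+2) ((d:ℝ)-(μ:ℝ))
    have e1 : (d:ℝ)+(μ:ℝ)+2+((d:ℝ)-(μ:ℝ)) = 2*(d:ℝ)+2 := by ring
    have e2 : (d:ℝ)+(μ:ℝ)+2+((d:ℝ)-(μ:ℝ))-1 = 2*(d:ℝ)+1 := by ring
    have e3 : (d:ℝ)+(μ:ℝ)+2-1 = (d:ℝ)+(μ:ℝ)+1 := by ring
    rw [e2, e1, e3] at h
    exact h
  have hX : gg n (d+1) (μ+1) = gg n d (μ+1) * (sn n (2*(d:ℝ)+2) * sn n (2*(d:ℝ)+1))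
      / (sn n ((d:ℝ)+(μ:ℝ)+2) * sn n ((d:ℝ)-(μ:ℝ))) := by
    rw [eq_div_iff (mul_ne_zero nza nzb)]
    linear_combination hP
  rw [hX, ha, hb, hs]
  field_simp

lemma grec0 {n d : ℕ} (hdn : d + 1 ≤ n) :
    gg n (d+1) 0 = 2 * gg n d 1
      + 2 * Real.cos (π*(2*(d:ℝ)+1)/(2*(n:ℝ))) * gg n d 0 := by
  have hn : 0 < n := by omega
  have h1n : (1:ℝ) ≤ (n:ℝ) := by exact_mod_cast hn
  have hdr : (d:ℝ) + 1 ≤ (n:ℝ) := by exact_mod_cast hdn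
  have nz1 : sn n ((d:ℝ)+1) ≠ 0 := sn_ne hn (by nlinarith [Nat.cast_nonneg (α := ℝ) d]) (by nlinarith [Nat.cast_nonneg (α := ℝ) d])
  rcases Nat.eq_zero_or_pos d with hd0 | hdpos
  · subst hd0
    have h0 : gg n 1 0 = sn n 2 / sn n 1 := by
      have := gg_one_below (n := n) (d := 0)
      simpa using this
    have nz : sn n 1 ≠ 0 := sn_ne hn one_pos (by nlinarith)
    rw [h0, show gg n 0 1 = 0 from gg_zero (by omega), show gg n 0 0 = 1 from gg_diag,
      div_eq_iff nz]
    unfold sn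
    rw [show π*(2:ℝ)/(2*(n:ℝ)) = 2*(π*(1:ℝ)/(2*(n:ℝ))) by ring, Real.sin_two_mul]
    push_cast
    ring_nf
  · have hd1 : 1 ≤ d := hdpos
    have hdr1 : (1:ℝ) ≤ (d:ℝ) := by exact_mod_cast hd1
    have nzd : sn n (d:ℝ) ≠ 0 := sn_ne hn (by nlinarith) (by nlinarith)
    have hP : gg n (d+1) 0 * sn n ((d:ℝ)+1) * sn n ((d:ℝ)+1)
        = gg n d 0 * (sn n (2*(d:ℝ)+2) * sn n (2*(d:ℝ)+1)) := by
      have h := gg_lift hdn d le_rfl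
      simp only [Nat.sub_self] at h
      have e3 : 2*(d:ℝ)+1-(d:ℝ) = (d:ℝ)+1 := by ring
      rw [e3] at h
      exact h
    have ha : gg n d 0 = gg n d 1 * (sn n ((d:ℝ)+1) / sn n (d:ℝ)) := by
      have := gg_ratio (n := n) (d := d) (ν := 0) hdpos
      convert this using 3 <;> push_cast <;> ring
    have hs : sn n (2*(d:ℝ)+2) * sn n (2*(d:ℝ)+1)
        = 2 * (sn n ((d:ℝ)+1) * sn n ((d:ℝ))) + 2 * Real.cos (π*(2*(d:ℝ)+1)/(2*(n:ℝ))) * (sn n ((d:ℝ)+1) * sn n ((d:ℝ)+1)) := by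
      have h := sinid' n ((d:ℝ)+1) ((d:ℝ)+1)
      have e1 : (d:ℝ)+1+((d:ℝ)+1) = 2*(d:ℝ)+2 := by ring
      have e2 : (d:ℝ)+1+((d:ℝ)+1)-1 = 2*(d:ℝ)+1 := by ring
      have e3 : (d:ℝ)+1-1 = (d:ℝ) := by ring
      rw [e2, e1, e3] at h
      rw [h]; ring
    have hX : gg n (d+1) 0 = gg n d 0 * (sn n (2*(d:ℝ)+2) * sn n (2*(d:ℝ)+1))
        / (sn n ((d:ℝ)+1) * sn n ((d:ℝ)+1)) := by
      rw [eq_div_iff (mul_ne_zero nz1 nz1)]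
      linear_combination hP
    rw [hX, hs, ha]
    field_simp


lemma gg_mono {n d l : ℕ} (hdn : d < n) (hl : l < d) : gg n d (l+1) < gg n d l := by
  have hn : 0 < n := by omega
  have h1n : (1:ℝ) ≤ (n:ℝ) := by exact_mod_cast hn
  have hdr : (d:ℝ) + 1 ≤ (n:ℝ) := by exact_mod_cast hdn
  have hlr : (l:ℝ) + 1 ≤ (d:ℝ) := by exact_mod_cast hl
  have hl0 : (0:ℝ) ≤ (l:ℝ) := Nat.cast_nonneg l
  have hpos : 0 < gg n d (l+1) := gg_pos hdn (by omega)
  rw [gg_ratio hl]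
  have hB : 0 < sn n ((d:ℝ)-(l:ℝ)) := sinpos hn (by nlinarith) (by nlinarith)
  have hAB : sn n ((d:ℝ)-(l:ℝ)) < sn n ((d:ℝ)+(l:ℝ)+1) := by
    unfold sn
    have key := Real.sin_sub_sin (π*((d:ℝ)+(l:ℝ)+1)/(2*(n:ℝ))) (π*((d:ℝ)-(l:ℝ))/(2*(n:ℝ)))
    have hπ := Real.pi_pos
    have e1 : (π*((d:ℝ)+(l:ℝ)+1)/(2*(n:ℝ)) - π*((d:ℝ)-(l:ℝ))/(2*(n:ℝ)))/2
        = π*(2*(l:ℝ)+1)/(4*(n:ℝ)) := by ring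
    have e2 : (π*((d:ℝ)+(l:ℝ)+1)/(2*(n:ℝ)) + π*((d:ℝ)-(l:ℝ))/(2*(n:ℝ)))/2
        = π*(2*(d:ℝ)+1)/(4*(n:ℝ)) := by ring
    rw [e1, e2] at key
    have hs1 : 0 < Real.sin (π*(2*(l:ℝ)+1)/(4*(n:ℝ))) := by
      apply Real.sin_pos_of_pos_of_lt_pi
      · positivity
      · rw [div_lt_iff₀ (by positivity)]; nlinarith
    have hs2 : 0 < Real.cos (π*(2*(d:ℝ)+1)/(4*(n:ℝ))) := by
      apply Real.cos_pos_of_mem_Ioo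
      constructor
      · have : (0:ℝ) < π*(2*(d:ℝ)+1)/(4*(n:ℝ)) := by positivity
        linarith [Real.pi_pos]
      · rw [div_lt_iff₀ (by positivity)]; nlinarith
    nlinarith
  have h1 : (1:ℝ) < sn n ((d:ℝ)+(l:ℝ)+1) / sn n ((d:ℝ)-(l:ℝ)) :=
    (one_lt_div hB).mpr hAB
  nlinarith

lemma gg_top {n ν : ℕ} (hn : 0 < n) (hν : ν < n) : gg n n ν = 0 := by
  rw [gg, if_pos (le_of_lt hν)]
  apply Finset.prod_eq_zero (i := 0) (by simp [Nat.sub_pos_of_lt hν])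
  have : sn n (2*(n:ℝ) - (0:ℕ)) = 0 := by
    have hn' : (n:ℝ) ≠ 0 := by positivity
    unfold sn
    rw [show π*(2*(n:ℝ)-((0:ℕ):ℝ))/(2*(n:ℝ)) = π * ((2*(n:ℝ))/(2*(n:ℝ))) by push_cast; ring,
      div_self (by positivity), mul_one, Real.sin_pi]
  rw [this, zero_div]

lemma grecAll {n d : ℕ} (hdn : d + 1 ≤ n) (μ : ℕ) :
    gg n (d+1) (μ+1) = gg n d μ + gg n d (μ+2)
      + 2 * Real.cos (π*(2*(d:ℝ)+1)/(2*(n:ℝ))) * gg n d (μ+1) := by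
  rcases lt_trichotomy μ d with h | h | h
  · exact grecS hdn h
  · subst h
    rw [gg_diag, gg_diag, gg_zero (by omega), gg_zero (by omega)]
    ring
  · rw [gg_zero (by omega), gg_zero h, gg_zero (by omega), gg_zero (by omega)]
    ring

noncomputable def cc (n k ν : ℕ) : ℝ := (if ν = 0 then (2:ℝ)^k/2 else (2:ℝ)^k) * gg n (n-k) ν

noncomputable def SS (n k : ℕ) (x : ℝ) : ℝ := ∑ ν ∈ Finset.range (n+3), cc n k ν * Real.cos ((ν:ℝ) * x)

lemma cc_zero {n k ν : ℕ} (h : n - k < ν) : cc n k ν = 0 := by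
  simp [cc, gg_zero h]

lemma ccrec {n k μ : ℕ} (hk : k + 1 ≤ n) :
    cc n k μ = (if μ = 0 then 0 else cc n (k+1) (μ-1)/2) + cc n (k+1) (μ+1)/2
      + (if μ = 1 then cc n (k+1) 0 / 2 else 0)
      - Real.cos (π*(2*(k:ℝ)+1)/(2*(n:ℝ))) * cc n (k+1) μ := by
  set d : ℕ := n - k - 1 with hd
  have e1 : n - k = d + 1 := by omega
  have e2 : n - (k+1) = d := by omega
  have hdn : d + 1 ≤ n := by omega
  have hdr : ((d:ℝ)) = (n:ℝ) - k - 1 := by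
    rw [hd]; push_cast [Nat.sub_sub, Nat.cast_sub (show k+1 ≤ n by omega)]; ring
  have hn0 : (n:ℝ) ≠ 0 := by
    have : 0 < n := by omega
    positivity
  have hcos : Real.cos (π*(2*(k:ℝ)+1)/(2*(n:ℝ)))
      = - Real.cos (π*(2*(d:ℝ)+1)/(2*(n:ℝ))) := by
    have earg : π*(2*(k:ℝ)+1)/(2*(n:ℝ)) = π - π*(2*(d:ℝ)+1)/(2*(n:ℝ)) := by
      rw [hdr]; field_simp; ring
    rw [earg, Real.cos_pi_sub]
  rw [hcos]
  unfold cc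
  rw [e1, e2]
  rcases Nat.eq_zero_or_pos μ with h0 | hpos
  · subst h0
    simp only [if_pos rfl, reduceIte]
    have := grec0 (n := n) (d := d) hdn
    rw [this]
    norm_num
    ring
  · obtain ⟨t, rfl⟩ := Nat.exists_eq_add_of_le hpos
    have hne : 1 + t ≠ 0 := by omega
    have e3 : 1 + t = t + 1 := by omega
    rw [e3]
    simp only [if_neg (show t+1 ≠ 0 by omega), Nat.add_sub_cancel]
    have hrec := grecAll (n := n) (d := d) hdn t
    rcases Nat.eq_zero_or_pos t with ht0 | htpos
    · subst ht0
      simp only [if_pos rfl, reduceIte]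
      rw [hrec]
      norm_num
      ring
    · rw [if_neg (show t + 1 ≠ 1 by omega), if_neg (show t ≠ 0 by omega),
        if_neg (show t + 1 + 1 ≠ 0 by omega)]
      rw [hrec]
      ring

lemma S_zero {n : ℕ} (hn : 0 < n) (x : ℝ) : SS n 0 x = Real.cos ((n:ℝ)*x) := by
  unfold SS
  rw [Finset.sum_eq_single n]
  · unfold cc
    rw [if_neg (by omega), Nat.sub_zero, gg_diag]
    norm_num
  · intro b hb hbn
    unfold cc
    rw [Nat.sub_zero]
    rcases Nat.lt_or_ge b n with h | h
    · rw [gg_top hn h]; ring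
    · rw [gg_zero (by omega)]; ring
  · intro h
    exact absurd (Finset.mem_range.mpr (by omega)) h

lemma S_step {n k : ℕ} (hk : k + 1 ≤ n) (x : ℝ) :
    SS n k x = (Real.cos x - Real.cos (π*(2*(k:ℝ)+1)/(2*(n:ℝ)))) * SS n (k+1) x := by
  set c := Real.cos (π*(2*(k:ℝ)+1)/(2*(n:ℝ))) with hc
  have coscos : ∀ a : ℝ, Real.cos (a*x) * Real.cos x
      = (Real.cos ((a+1)*x) + Real.cos ((a-1)*x))/2 := by
    intro a
    rw [show (a+1)*x = a*x + x by ring, show (a-1)*x = a*x - x by ring,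
      Real.cos_add, Real.cos_sub]
    ring
  have expand : (Real.cos x - c) * SS n (k+1) x
      = (∑ ν ∈ Finset.range (n+3), (cc n (k+1) ν/2) * Real.cos (((ν:ℝ)+1)*x))
      + (∑ ν ∈ Finset.range (n+3), (cc n (k+1) ν/2) * Real.cos (((ν:ℝ)-1)*x))
      - c * SS n (k+1) x := by
    unfold SS
    rw [sub_mul, Finset.mul_sum]
    have hterm : ∀ ν ∈ Finset.range (n+3), Real.cos x * (cc n (k+1) ν * Real.cos ((ν:ℝ)*x))
        = (cc n (k+1) ν/2) * Real.cos (((ν:ℝ)+1)*x) + (cc n (k+1) ν/2) * Real.cos (((ν:ℝ)-1)*x) := by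
      intro ν _
      rw [show Real.cos x * (cc n (k+1) ν * Real.cos ((ν:ℝ)*x))
          = cc n (k+1) ν * (Real.cos ((ν:ℝ)*x) * Real.cos x) by ring, coscos]
      ring
    rw [Finset.sum_congr rfl hterm, Finset.sum_add_distrib]
  have T1 : (∑ ν ∈ Finset.range (n+3), (cc n (k+1) ν/2) * Real.cos (((ν:ℝ)+1)*x))
      = ∑ μ ∈ Finset.range (n+3), (if μ = 0 then 0 else cc n (k+1) (μ-1)/2) * Real.cos ((μ:ℝ)*x) := by
    rw [Finset.sum_range_succ (f := fun ν => (cc n (k+1) ν/2) * Real.cos (((ν:ℝ)+1)*x)),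
      cc_zero (show n - (k+1) < n + 2 by omega)]
    rw [Finset.sum_range_succ' (f := fun μ => (if μ = 0 then 0 else cc n (k+1) (μ-1)/2) * Real.cos ((μ:ℝ)*x))]
    simp only [if_pos rfl, if_true, reduceIte, if_neg (Nat.succ_ne_zero _), Nat.add_sub_cancel,
      zero_mul, add_zero, zero_div]
    apply Finset.sum_congr rfl
    intro i _
    push_cast
    ring_nf
  have T2 : (∑ ν ∈ Finset.range (n+3), (cc n (k+1) ν/2) * Real.cos (((ν:ℝ)-1)*x))
      = (∑ μ ∈ Finset.range (n+3), (cc n (k+1) (μ+1)/2) * Real.cos ((μ:ℝ)*x))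
        + (cc n (k+1) 0/2) * Real.cos x := by
    rw [Finset.sum_range_succ' (f := fun ν => (cc n (k+1) ν/2) * Real.cos (((ν:ℝ)-1)*x))]
    rw [Finset.sum_range_succ (f := fun μ => (cc n (k+1) (μ+1)/2) * Real.cos ((μ:ℝ)*x)),
      cc_zero (show n - (k+1) < n + 2 + 1 by omega)]
    simp only [Nat.cast_zero, zero_div, zero_mul, add_zero]
    rw [show (((0:ℝ))-1)*x = -x by ring, Real.cos_neg]
    congr 1
    apply Finset.sum_congr rfl
    intro i _
    push_cast
    ring_nf
  have T3 : (cc n (k+1) 0/2) * Real.cos x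
      = ∑ μ ∈ Finset.range (n+3), (if μ = 1 then cc n (k+1) 0/2 else 0) * Real.cos ((μ:ℝ)*x) := by
    rw [Finset.sum_eq_single 1]
    · norm_num
    · intro b _ hb
      rw [if_neg hb, zero_mul]
    · intro h
      exact absurd (Finset.mem_range.mpr (by omega)) h
  rw [expand, T1, T2, T3]
  unfold SS
  rw [Finset.mul_sum]
  rw [← Finset.sum_add_distrib, ← Finset.sum_add_distrib, ← Finset.sum_sub_distrib]
  apply Finset.sum_congr rfl
  intro μ _
  have h := ccrec (n := n) (k := k) (μ := μ) hk
  rw [← hc] at h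
  linear_combination (Real.cos ((μ:ℝ)*x)) * h

lemma FF {n : ℕ} (hn : 0 < n) : ∀ k, k ≤ n → ∀ x : ℝ, Real.cos ((n:ℝ)*x)
    = SS n k x * ∏ j ∈ Finset.range k, (Real.cos x - Real.cos (π*(2*(j:ℝ)+1)/(2*(n:ℝ)))) := by
  intro k
  induction k with
  | zero => intro _ x; simp [S_zero hn x]
  | succ k ih =>
    intro hk x
    rw [Finset.prod_range_succ]
    have h1 := ih (by omega) x
    rw [h1, S_step (by omega) x]
    ring

lemma S_shape {n k : ℕ} (x : ℝ) :
    SS n k x = ((2:ℝ)^k * gg n (n-k) 0)/2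
      + ∑ ν ∈ Finset.Icc 1 (n-k), (2:ℝ)^k * gg n (n-k) ν * Real.cos ((ν:ℝ)*x) := by
  unfold SS
  rw [Finset.sum_range_succ' (f := fun ν => cc n k ν * Real.cos ((ν:ℝ)*x))]
  have h2 : ∑ ν ∈ Finset.Icc 1 (n-k), (2:ℝ)^k * gg n (n-k) ν * Real.cos ((ν:ℝ)*x)
      = ∑ i ∈ Finset.range (n+2), cc n k (i+1) * Real.cos (((i+1:ℕ):ℝ)*x) := by
    rw [← Finset.Ico_add_one_right_eq_Icc, Finset.sum_Ico_eq_sum_range]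
    have e : n - k + 1 - 1 = n - k := by omega
    rw [e]
    have step1 : ∑ i ∈ Finset.range (n-k), (2:ℝ)^k * gg n (n-k) (1+i) * Real.cos (((1+i:ℕ):ℝ)*x)
        = ∑ i ∈ Finset.range (n-k), cc n k (i+1) * Real.cos (((i+1:ℕ):ℝ)*x) := by
      apply Finset.sum_congr rfl
      intro i _
      rw [Nat.add_comm 1 i]
      unfold cc
      rw [if_neg (show i+1 ≠ 0 by omega)]
    rw [step1]
    apply Finset.sum_subset (Finset.range_subset_range.mpr (show n-k ≤ n+2 by omega))
    intro i _ hi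
    rw [Finset.mem_range] at hi
    rw [cc_zero (show n - k < i + 1 by omega)]
    ring
  rw [h2]
  unfold cc
  rw [if_pos rfl]
  push_cast
  rw [zero_mul, Real.cos_zero]
  ring

lemma Tdeg : ∀ ν : ℕ, (Polynomial.Chebyshev.T ℝ (ν:ℤ)).natDegree ≤ ν := by
  intro ν
  induction ν using Nat.strong_induction_on with
  | _ ν ih =>
    match ν with
    | 0 => simp [Polynomial.Chebyshev.T_zero]
    | 1 => simp [Polynomial.Chebyshev.T_one, Polynomial.natDegree_X_le]
    | (t+2) =>
      rw [show ((t+2:ℕ):ℤ) = (t:ℤ)+2 by push_cast; ring, Polynomial.Chebyshev.T_add_two]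
      apply le_trans (Polynomial.natDegree_sub_le _ _)
      apply max_le
      · apply le_trans (Polynomial.natDegree_mul_le)
        have h1 : (2*Polynomial.X : ℝ[X]).natDegree ≤ 1 := by
          apply le_trans (Polynomial.natDegree_mul_le)
          simp [Polynomial.natDegree_X_le]
        have h2 : (Polynomial.Chebyshev.T ℝ ((t:ℤ)+1)).natDegree ≤ t+1 := by
          have := ih (t+1) (by omega)
          rwa [show ((t+1:ℕ):ℤ) = (t:ℤ)+1 by push_cast; ring] at this
        omega
      · have := ih t (by omega)
        omega

lemma Tcoeff : ∀ ν : ℕ, (Polynomial.Chebyshev.T ℝ (ν:ℤ)).coeff ν = 2^(ν-1) := by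
  intro ν
  induction ν using Nat.strong_induction_on with
  | _ ν ih =>
    match ν with
    | 0 => simp [Polynomial.Chebyshev.T_zero]
    | 1 => simp [Polynomial.Chebyshev.T_one]
    | (t+2) =>
      rw [show ((t+2:ℕ):ℤ) = (t:ℤ)+2 by push_cast; ring, Polynomial.Chebyshev.T_add_two]
      rw [Polynomial.coeff_sub]
      have hz : (Polynomial.Chebyshev.T ℝ (t:ℤ)).coeff (t+2) = 0 := by
        apply Polynomial.coeff_eq_zero_of_natDegree_lt
        have := Tdeg t
        omega
      rw [hz, sub_zero, mul_assoc, show (2 : ℝ[X]) = Polynomial.C 2 from (Polynomial.C_eq_natCast 2).symm.trans (by norm_num),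
        Polynomial.coeff_C_mul, show t+2 = (t+1)+1 by omega, Polynomial.coeff_X_mul]
      have := ih (t+1) (by omega)
      rw [show ((t+1:ℕ):ℤ) = (t:ℤ)+1 by push_cast; ring] at this
      rw [this]
      simp
      ring

-- extraction of coefficients from a vanishing Chebyshev combination
lemma cheb_extract (d : ℕ) (e : ℕ → ℝ)
    (h : ∑ ν ∈ Finset.range (d+1), Polynomial.C (e ν) * Polynomial.Chebyshev.T ℝ (ν:ℤ) = 0) :
    ∀ l, l ≤ d → e l = 0 := by
  suffices H : ∀ j, ∀ l, l ≤ d → d - l ≤ j → e l = 0 by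
    intro l hl; exact H d l hl (by omega)
  intro j
  induction j with
  | zero =>
    intro l hl hj
    have hld : l = d := by omega
    subst hld
    have := congrArg (fun p => Polynomial.coeff p l) h
    simp only [Polynomial.finset_sum_coeff, Polynomial.coeff_C_mul, Polynomial.coeff_zero] at this
    rw [Finset.sum_eq_single l] at this
    · rw [Tcoeff l] at this
      have h2 : (0:ℝ) < 2^(l-1) := by positivity
      nlinarith [this]
    · intro b hb hbl
      rw [Finset.mem_range] at hb
      have hblt : b < l := by omega
      rw [Polynomial.coeff_eq_zero_of_natDegree_lt (lt_of_le_of_lt (Tdeg b) hblt)]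
      ring
    · intro hli
      exact absurd (Finset.mem_range.mpr (by omega)) hli
  | succ j ihj =>
    intro l hl hj
    have := congrArg (fun p => Polynomial.coeff p l) h
    simp only [Polynomial.finset_sum_coeff, Polynomial.coeff_C_mul, Polynomial.coeff_zero] at this
    rw [Finset.sum_eq_single l] at this
    · rw [Tcoeff l] at this
      have h2 : (0:ℝ) < 2^(l-1) := by positivity
      nlinarith [this]
    · intro b hb hbl
      rw [Finset.mem_range] at hb
      rcases Nat.lt_or_ge b l with hblt | hbge
      · rw [Polynomial.coeff_eq_zero_of_natDegree_lt (lt_of_le_of_lt (Tdeg b) hblt)]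
        ring
      · have : e b = 0 := ihj b (by omega) (by omega)
        rw [this]
        ring
    · intro hli
      exact absurd (Finset.mem_range.mpr (by omega)) hli



theorem stmt_19 (q m : ℕ) (hq : 1 ≤ q) (hm : m ≤ q) :
    ∃ a : ℕ → ℝ,
      (∀ x : ℝ, Real.cos (((q : ℝ) + 1) * x) =
        (a 0 / 2 + ∑ ν ∈ Finset.Icc 1 (q - m), a ν * Real.cos ((ν : ℝ) * x)) *
          ∏ j ∈ Finset.range (m + 1),
            (Real.cos x - Real.cos (π * (2 * (j : ℝ) + 1) / (2 * (q : ℝ) + 2)))) ∧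
      (∀ b : ℕ → ℝ,
        (∀ x : ℝ, Real.cos (((q : ℝ) + 1) * x) =
          (b 0 / 2 + ∑ ν ∈ Finset.Icc 1 (q - m), b ν * Real.cos ((ν : ℝ) * x)) *
            ∏ j ∈ Finset.range (m + 1),
              (Real.cos x - Real.cos (π * (2 * (j : ℝ) + 1) / (2 * (q : ℝ) + 2)))) →
        ∀ l ≤ q - m, b l = a l) ∧
      (∀ l, l < q - m → a (l + 1) < a l) ∧ 0 < a (q - m) := by
  have hn : 0 < q + 1 := by omega
  have hEx : ∀ x : ℝ, Real.cos (((q:ℝ)+1)*x) =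
      ((2:ℝ)^(m+1) * gg (q+1) (q-m) 0 / 2
        + ∑ ν ∈ Finset.Icc 1 (q-m), (2:ℝ)^(m+1) * gg (q+1) (q-m) ν * Real.cos ((ν:ℝ)*x)) *
      ∏ j ∈ Finset.range (m+1),
        (Real.cos x - Real.cos (π*(2*(j:ℝ)+1)/(2*(q:ℝ)+2))) := by
    intro x
    have h := FF (n := q+1) hn (m+1) (by omega) x
    have e1 : q + 1 - (m+1) = q - m := by omega
    have h2 := S_shape (n := q+1) (k := m+1) x
    rw [e1] at h2
    rw [h2] at h
    have e2 : (((q+1:ℕ)):ℝ) = (q:ℝ)+1 := by push_cast; ring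
    rw [e2] at h
    have e4 : ∏ j ∈ Finset.range (m+1),
          (Real.cos x - Real.cos (π*(2*(j:ℝ)+1)/(2*((q:ℝ)+1))))
        = ∏ j ∈ Finset.range (m+1),
          (Real.cos x - Real.cos (π*(2*(j:ℝ)+1)/(2*(q:ℝ)+2))) := by
      apply Finset.prod_congr rfl
      intro j _
      rw [show (2*((q:ℝ)+1)) = 2*(q:ℝ)+2 by ring]
    rw [e4] at h
    exact h
  refine ⟨fun ν => (2:ℝ)^(m+1) * gg (q+1) (q-m) ν, fun x => hEx x, ?_, ?_, ?_⟩
  · -- uniqueness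
    intro b hb l hl
    set e : ℕ → ℝ := fun ν => if ν = 0 then (b 0 - (2:ℝ)^(m+1) * gg (q+1) (q-m) 0)/2
      else (b ν - (2:ℝ)^(m+1) * gg (q+1) (q-m) ν) with he
    have hΔ : ∀ x : ℝ,
        ((b 0 - (2:ℝ)^(m+1) * gg (q+1) (q-m) 0)/2
          + ∑ ν ∈ Finset.Icc 1 (q-m), (b ν - (2:ℝ)^(m+1) * gg (q+1) (q-m) ν) * Real.cos ((ν:ℝ)*x))
        * ∏ j ∈ Finset.range (m+1),
            (Real.cos x - Real.cos (π*(2*(j:ℝ)+1)/(2*(q:ℝ)+2))) = 0 := by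
      intro x
      have h1 := hb x
      have h2 := hEx x
      have hsub : ∑ ν ∈ Finset.Icc 1 (q-m), (b ν - (2:ℝ)^(m+1) * gg (q+1) (q-m) ν) * Real.cos ((ν:ℝ)*x)
          = (∑ ν ∈ Finset.Icc 1 (q-m), b ν * Real.cos ((ν:ℝ)*x))
            - ∑ ν ∈ Finset.Icc 1 (q-m), (2:ℝ)^(m+1) * gg (q+1) (q-m) ν * Real.cos ((ν:ℝ)*x) := by
        rw [← Finset.sum_sub_distrib]
        apply Finset.sum_congr rfl
        intro ν _
        ring
      rw [hsub]
      linear_combination h2 - h1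
    set p : Polynomial ℝ := ∑ ν ∈ Finset.range (q-m+1),
      Polynomial.C (e ν) * Polynomial.Chebyshev.T ℝ (ν:ℤ) with hp
    set PP : Polynomial ℝ := ∏ j ∈ Finset.range (m+1),
      (Polynomial.X - Polynomial.C (Real.cos (π*(2*(j:ℝ)+1)/(2*(q:ℝ)+2)))) with hPP
    have hroot : Set.Icc (-1:ℝ) 1 ⊆ {y | (p * PP).IsRoot y} := by
      intro y hy
      have hcos : Real.cos (Real.arccos y) = y := Real.cos_arccos hy.1 hy.2
      have hpe : p.eval (Real.cos (Real.arccos y))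
          = ((b 0 - (2:ℝ)^(m+1) * gg (q+1) (q-m) 0)/2
            + ∑ ν ∈ Finset.Icc 1 (q-m), (b ν - (2:ℝ)^(m+1) * gg (q+1) (q-m) ν)
                * Real.cos ((ν:ℝ)*(Real.arccos y))) := by
        rw [hp, Polynomial.eval_finset_sum]
        have hterm : ∀ ν ∈ Finset.range (q-m+1),
            (Polynomial.C (e ν) * Polynomial.Chebyshev.T ℝ (ν:ℤ)).eval (Real.cos (Real.arccos y))
              = e ν * Real.cos ((ν:ℝ)*(Real.arccos y)) := by
          intro ν _
          rw [Polynomial.eval_mul, Polynomial.eval_C, Polynomial.Chebyshev.T_real_cos]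
          norm_num
        rw [Finset.sum_congr rfl hterm]
        rw [Finset.sum_range_succ' (f := fun ν => e ν * Real.cos ((ν:ℝ)*(Real.arccos y)))]
        have h0 : e 0 * Real.cos (((0:ℕ):ℝ)*(Real.arccos y))
            = (b 0 - (2:ℝ)^(m+1) * gg (q+1) (q-m) 0)/2 := by
          rw [he]
          norm_num
        have hIcc : ∑ ν ∈ Finset.Icc 1 (q-m), (b ν - (2:ℝ)^(m+1) * gg (q+1) (q-m) ν)
                * Real.cos ((ν:ℝ)*(Real.arccos y))
            = ∑ i ∈ Finset.range (q-m), e (i+1) * Real.cos (((i+1:ℕ):ℝ)*(Real.arccos y)) := by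
          rw [← Finset.Ico_add_one_right_eq_Icc, Finset.sum_Ico_eq_sum_range]
          have e5 : q - m + 1 - 1 = q - m := by omega
          rw [e5]
          apply Finset.sum_congr rfl
          intro i _
          rw [Nat.add_comm 1 i, he]
          simp only [if_neg (show i+1 ≠ 0 by omega)]
        rw [h0, ← hIcc]
        ring
      have hPPe : PP.eval (Real.cos (Real.arccos y)) = ∏ j ∈ Finset.range (m+1),
          (Real.cos (Real.arccos y) - Real.cos (π*(2*(j:ℝ)+1)/(2*(q:ℝ)+2))) := by
        rw [hPP, Polynomial.eval_prod]
        apply Finset.prod_congr rfl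
        intro j _
        rw [Polynomial.eval_sub, Polynomial.eval_X, Polynomial.eval_C]
      show (p * PP).eval y = 0
      rw [← hcos, Polynomial.eval_mul, hpe, hPPe]
      exact hΔ (Real.arccos y)
    have hinf : {y : ℝ | (p * PP).IsRoot y}.Infinite :=
      Set.Infinite.mono hroot (Set.Icc_infinite (by norm_num))
    have hzero : p * PP = 0 := Polynomial.eq_zero_of_infinite_isRoot _ hinf
    have hPPm : PP.Monic := Polynomial.monic_prod_of_monic _ _
      (fun j _ => Polynomial.monic_X_sub_C _)
    have hp0 : p = 0 := by
      rcases mul_eq_zero.mp hzero with h | h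
      · exact h
      · exact absurd h hPPm.ne_zero
    have hext := cheb_extract (q-m) e (by rw [← hp]; exact hp0)
    rcases Nat.eq_zero_or_pos l with hl0 | hlpos
    · subst hl0
      have h9 := hext 0 (by omega)
      rw [he] at h9
      norm_num at h9
      show b 0 = (2:ℝ)^(m+1) * gg (q+1) (q-m) 0
      linarith
    · have h9 := hext l hl
      rw [he] at h9
      simp only [if_neg (show l ≠ 0 by omega)] at h9
      show b l = (2:ℝ)^(m+1) * gg (q+1) (q-m) l
      linarith
  · -- strict decrease
    intro l hl
    have hmono := gg_mono (n := q+1) (d := q-m) (l := l) (by omega) hl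
    have hpow : (0:ℝ) < (2:ℝ)^(m+1) := by positivity
    exact mul_lt_mul_of_pos_left hmono hpow
  · -- positivity
    show (0:ℝ) < (2:ℝ)^(m+1) * gg (q+1) (q-m) (q-m)
    rw [gg_diag]
    positivity

end DiscPaper
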